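/- Let V, W be finite-dimensional inner product spaces and A, B ∈ Lin(V, W). If rank(A) > rank(B), then the operator norm of the Moore–Penrose pseudoinverse A† satisfies ‖A†‖ ≥ 1/‖A − B‖. -/

import Mathlib

open Module LinearMap Metric Filter Topology Polynomial

/-- Orthogonal projection onto a submodule, as an endomorphism. -/
noncomputable def orthProj {E : Type*} [NormedAddCommGroup E] [InnerProductSpace ℝ E]
    [FiniteDimensional ℝ E] (K : Submodule ℝ E) : E →L[ℝ] E :=
  K.subtypeL.comp (K.orthogonalProjectionOnto)

/-- `X` is the Moore–Penrose pseudoinverse of `A`: `A X = Proj_{im A}`,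
`X A = Proj_{im A*}`, together with the normalization `X Proj_{im A} = X`
(i.e. `X` vanishes on `(im A)ᗮ`), which pins `X` down uniquely. -/
def IsMP {V W : Type*} [NormedAddCommGroup V] [InnerProductSpace ℝ V] [FiniteDimensional ℝ V]
    [NormedAddCommGroup W] [InnerProductSpace ℝ W] [FiniteDimensional ℝ W]
    (A : V →L[ℝ] W) (X : W →L[ℝ] V) : Prop :=
  A ∘L X = orthProj (LinearMap.range (A : V →ₗ[ℝ] W)) ∧
  X ∘L A = orthProj (LinearMap.range ((ContinuousLinearMap.adjoint A : W →L[ℝ] V) : W →ₗ[ℝ] V)) ∧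
  X ∘L orthProj (LinearMap.range (A : V →ₗ[ℝ] W)) = X

lemma ker_adjoint_eq {V W : Type*} [NormedAddCommGroup V] [InnerProductSpace ℝ V]
    [FiniteDimensional ℝ V] [NormedAddCommGroup W] [InnerProductSpace ℝ W]
    [FiniteDimensional ℝ W] (A : V →L[ℝ] W) :
    LinearMap.ker ((ContinuousLinearMap.adjoint A : W →L[ℝ] V) : W →ₗ[ℝ] V) = (LinearMap.range (A : V →ₗ[ℝ] W))ᗮ := by
  ext x
  simp only [LinearMap.mem_ker, Submodule.mem_orthogonal, ContinuousLinearMap.coe_coe]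
  constructor
  · rintro hx _ ⟨y, rfl⟩
    rw [ContinuousLinearMap.coe_coe, ← ContinuousLinearMap.adjoint_inner_right]
    simp [hx]
  · intro hx
    rw [← inner_self_eq_zero (𝕜 := ℝ), ContinuousLinearMap.adjoint_inner_right]
    exact hx _ ⟨_, rfl⟩

lemma finrank_range_adjoint {V W : Type*} [NormedAddCommGroup V] [InnerProductSpace ℝ V]
    [FiniteDimensional ℝ V] [NormedAddCommGroup W] [InnerProductSpace ℝ W]
    [FiniteDimensional ℝ W] (A : V →L[ℝ] W) :
    finrank ℝ (LinearMap.range ((ContinuousLinearMap.adjoint A : W →L[ℝ] V) : W →ₗ[ℝ] V)) =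
      finrank ℝ (LinearMap.range (A : V →ₗ[ℝ] W)) := by
  have h1 : finrank ℝ (LinearMap.range ((ContinuousLinearMap.adjoint A : W →L[ℝ] V) : W →ₗ[ℝ] V)) +
      finrank ℝ (LinearMap.ker ((ContinuousLinearMap.adjoint A : W →L[ℝ] V) : W →ₗ[ℝ] V)) = finrank ℝ W :=
    LinearMap.finrank_range_add_finrank_ker (ContinuousLinearMap.adjoint A : W →ₗ[ℝ] V)
  have h2 := Submodule.finrank_add_finrank_orthogonal (K := LinearMap.range (A : V →ₗ[ℝ] W))
  rw [ker_adjoint_eq] at h1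
  omega

/-- If `rank A > rank B` then `‖A†‖ ≥ 1 / ‖A − B‖`. -/
theorem pseudoinverse_norm_lower_bound_of_rank_gt
    {V W : Type*} [NormedAddCommGroup V] [InnerProductSpace ℝ V] [FiniteDimensional ℝ V]
    [NormedAddCommGroup W] [InnerProductSpace ℝ W] [FiniteDimensional ℝ W]
    (A B : V →L[ℝ] W) (Adag : W →L[ℝ] V) (hA : IsMP A Adag)
    (h : finrank ℝ (LinearMap.range (B : V →ₗ[ℝ] W)) < finrank ℝ (LinearMap.range (A : V →ₗ[ℝ] W))) :
    1 / ‖A - B‖ ≤ ‖Adag‖ := by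
  -- A ≠ B
  have hAB : ‖A - B‖ ≠ 0 := by
    intro h0
    rw [norm_eq_zero, sub_eq_zero] at h0
    subst h0; exact lt_irrefl _ h
  have hABpos : 0 < ‖A - B‖ := lt_of_le_of_ne (norm_nonneg _) (Ne.symm hAB)
  -- the intersection ker B ⊓ range A* is nontrivial
  have hK : LinearMap.ker (B : V →ₗ[ℝ] W) ⊓ LinearMap.range ((ContinuousLinearMap.adjoint A : W →L[ℝ] V) : W →ₗ[ℝ] V) ≠ ⊥ := by
    rw [← Submodule.one_le_finrank_iff]
    have h1 := Submodule.finrank_sup_add_finrank_inf_eq (LinearMap.ker (B : V →ₗ[ℝ] W))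
      (LinearMap.range ((ContinuousLinearMap.adjoint A : W →L[ℝ] V) : W →ₗ[ℝ] V))
    have h2 : finrank ℝ ↥(LinearMap.ker (B : V →ₗ[ℝ] W) ⊔ LinearMap.range ((ContinuousLinearMap.adjoint A : W →L[ℝ] V) : W →ₗ[ℝ] V))
        ≤ finrank ℝ V := Submodule.finrank_le _
    have h3 : finrank ℝ (LinearMap.range (B : V →ₗ[ℝ] W)) + finrank ℝ (LinearMap.ker (B : V →ₗ[ℝ] W)) = finrank ℝ V :=
      LinearMap.finrank_range_add_finrank_ker (B : V →ₗ[ℝ] W)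
    have h4 := finrank_range_adjoint A
    omega
  obtain ⟨x, hxK, hx0⟩ := Submodule.exists_mem_ne_zero_of_ne_bot hK
  have hxB : B x = 0 := hxK.1
  have hxA : Adag (A x) = x := by
    have := hA.2.1
    have hx : orthProj (LinearMap.range ((ContinuousLinearMap.adjoint A : W →L[ℝ] V) : W →ₗ[ℝ] V)) x = x := by
      exact Submodule.starProjection_eq_self_iff.2 hxK.2
    calc Adag (A x) = (Adag ∘L A) x := rfl
      _ = x := by rw [this, hx]
  have key : ‖x‖ ≤ ‖Adag‖ * (‖A - B‖ * ‖x‖) := by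
    calc ‖x‖ = ‖Adag ((A - B) x)‖ := by
          rw [ContinuousLinearMap.sub_apply, hxB, sub_zero, hxA]
      _ ≤ ‖Adag‖ * ‖(A - B) x‖ := (Adag.le_opNorm _)
      _ ≤ ‖Adag‖ * (‖A - B‖ * ‖x‖) := by
          gcongr; exact (A - B).le_opNorm x
  have hxpos : 0 < ‖x‖ := norm_pos_iff.2 hx0
  rw [div_le_iff₀ hABpos]
  nlinarith [norm_nonneg Adag]
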